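/- Let F = {p ∈ ℝ⁶ : 0 ≤ p₁ ≤ 5, 0 ≤ p₂ ≤ 5, 0 ≤ p₃ ≤ 4, 0 ≤ p₄ ≤ 1, 0 ≤ p₅ ≤ 1, 0 ≤ p₆ ≤ 1, p₁+p₂+p₄ ≥ 5, p₂+p₃+p₅ ≥ 5, p₁+p₃+p₆ ≥ 7, p₄+p₅+p₆ ≥ 2, p₂+p₃+p₄ ≥ 5}. Then the minimum of p₁+p₂+p₃+p₄+p₅+p₆ over F equals 19/2, attained for example at (3, 3/2, 3, 1/2, 1/2, 1). -/

import Mathlib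

/-- Minimizing total payment over the polytope `F` of individually rational
payment vectors satisfying the five core constraints gives minimum 19/2,
attained e.g. at (3, 3/2, 3, 1/2, 1/2, 1).
(Coordinates p₁,…,p₆ are encoded as p 0,…,p 5.) -/
theorem stmt_6 :
    let F : Set (Fin 6 → ℝ) :=
      {p | 0 ≤ p 0 ∧ p 0 ≤ 5 ∧ 0 ≤ p 1 ∧ p 1 ≤ 5 ∧ 0 ≤ p 2 ∧ p 2 ≤ 4 ∧
        0 ≤ p 3 ∧ p 3 ≤ 1 ∧ 0 ≤ p 4 ∧ p 4 ≤ 1 ∧ 0 ≤ p 5 ∧ p 5 ≤ 1 ∧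
        p 0 + p 1 + p 3 ≥ 5 ∧ p 1 + p 2 + p 4 ≥ 5 ∧ p 0 + p 2 + p 5 ≥ 7 ∧
        p 3 + p 4 + p 5 ≥ 2 ∧ p 1 + p 2 + p 3 ≥ 5}
    IsLeast ((fun p : Fin 6 → ℝ => p 0 + p 1 + p 2 + p 3 + p 4 + p 5) '' F) (19 / 2) ∧
      (![3, 3 / 2, 3, 1 / 2, 1 / 2, 1] : Fin 6 → ℝ) ∈ F ∧
      ((3 : ℝ) + 3 / 2 + 3 + 1 / 2 + 1 / 2 + 1 = 19 / 2) := by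
  intro F
  have h5 : (![3, 3 / 2, 3, 1 / 2, 1 / 2, 1] : Fin 6 → ℝ) 5 = 1 := rfl
  have h2 : (![3, 3 / 2, 3, 1 / 2, 1 / 2, 1] : Fin 6 → ℝ) 2 = 3 := rfl
  have h3 : (![3, 3 / 2, 3, 1 / 2, 1 / 2, 1] : Fin 6 → ℝ) 3 = 1 / 2 := rfl
  have h4 : (![3, 3 / 2, 3, 1 / 2, 1 / 2, 1] : Fin 6 → ℝ) 4 = 1 / 2 := rfl
  have hmem : (![3, 3 / 2, 3, 1 / 2, 1 / 2, 1] : Fin 6 → ℝ) ∈ F := by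
    simp only [F, Set.mem_setOf_eq, Matrix.cons_val_zero, Matrix.cons_val_one,
      Matrix.head_cons]
    norm_num [Matrix.cons_val_succ, h5, h2, h3, h4]
  refine ⟨⟨⟨_, hmem, by norm_num [Matrix.cons_val_succ, h5, h2, h3, h4]⟩, ?_⟩, hmem, by norm_num⟩
  rintro x ⟨p, hp, rfl⟩
  obtain ⟨_, _, _, _, _, _, _, _, _, _, _, _, h1, h2, h3, h4, _⟩ := hp
  linarith
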